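/- Let G = (V,E) be a connected, non-bipartite cubic graph and let T_V and T_E be the two rooted binary trees on a common taxon set constructed from G with parameter M = 36|E| + 8|V| as described. Then every character f using at most 2 states that attains d^2_MP(T_V,T_E) satisfies l_f(T_E) > l_f(T_V); in particular d^2_MP(T_V,T_E) = l_f(T_E) − l_f(T_V) for every such f. -/

import Mathlib

namespace MPDist

/-- A rooted binary phylogenetic tree: leaves are labelled by taxa,
every internal vertex (including the root) has exactly two children. -/
inductive PTree (X : Type) : Type
  | leaf : X → PTree X
  | node : PTree X → PTree X → PTree X

namespace PTree

/-- The list of leaf labels (taxa) of a tree. -/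
def leaves {X : Type} : PTree X → List X
  | .leaf x => [x]
  | .node l r => l.leaves ++ r.leaves

/-- Relabelling of taxa. -/
def map {X Y : Type} (φ : X → Y) : PTree X → PTree Y
  | .leaf x => .leaf (φ x)
  | .node l r => .node (l.map φ) (r.map φ)

end PTree

/-- `T` is a phylogenetic tree on the taxon set `X`:
its leaves are bijectively labelled by the elements of `X`. -/
def IsPhylo {X : Type} (T : PTree X) : Prop :=
  T.leaves.Nodup ∧ ∀ x : X, x ∈ T.leaves

/-- A state-labelled binary tree (an extension assigns a state to every vertex). -/
inductive ETree (C : Type) : Type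
  | leaf : C → ETree C
  | node : C → ETree C → ETree C → ETree C

namespace ETree

/-- The state at the root. -/
def root {C : Type} : ETree C → C
  | .leaf c => c
  | .node c _ _ => c

/-- The number of edges `{u,v}` with different states at the two endpoints
(substitutions/mutations). -/
def changes {C : Type} [DecidableEq C] : ETree C → ℕ
  | .leaf _ => 0
  | .node c l r =>
      ((if l.root = c then 0 else 1) + (if r.root = c then 0 else 1)) +
        (l.changes + r.changes)

end ETree

/-- `g` is an extension of the character `f` to the tree `T`: it has the same
shape as `T`, assigns a state to every vertex, and agrees with `f` on the taxa. -/
inductive IsExtension {X C : Type} (f : X → C) : PTree X → ETree C → Prop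
  | leaf (x : X) : IsExtension f (.leaf x) (.leaf (f x))
  | node {l r : PTree X} {gl gr : ETree C} (c : C) :
      IsExtension f l gl → IsExtension f r gr →
      IsExtension f (.node l r) (.node c gl gr)

/-- The parsimony score `l_f(T)`: the minimum number of mutation edges
over all extensions of `f` to `T`. -/
noncomputable def pscore {X C : Type} [DecidableEq C] (f : X → C) (T : PTree X) : ℕ :=
  sInf { k : ℕ | ∃ g : ETree C, IsExtension f T g ∧ g.changes = k }

/-- The MP distance `d_MP(T1,T2) = max_f |l_f(T1) − l_f(T2)|`, the maximum taken
over all characters `f` on the taxon set (states drawn from `ℕ`). -/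
noncomputable def dMP {X : Type} (T1 T2 : PTree X) : ℕ :=
  sSup { k : ℕ | ∃ f : X → ℕ, k = ((pscore f T1 : ℤ) - (pscore f T2 : ℤ)).natAbs }

/-- `d^i_MP(T1,T2)`: as `dMP`, but over characters using at most `i` states. -/
noncomputable def dMPk {X : Type} (i : ℕ) (T1 T2 : PTree X) : ℕ :=
  sSup { k : ℕ | ∃ f : X → Fin i, k = ((pscore f T1 : ℤ) - (pscore f T2 : ℤ)).natAbs }

/-- `max_f (l_f(T2) − l_f(T1))` over all characters `f`. -/
noncomputable def maxDiff {X : Type} (T1 T2 : PTree X) : ℤ :=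
  sSup { d : ℤ | ∃ f : X → ℕ, d = (pscore f T2 : ℤ) - (pscore f T1 : ℤ) }

/-- `max_f (l_f(T2) − l_f(T1))` over all characters `f` with at most `i` states. -/
noncomputable def maxDiffk {X : Type} (i : ℕ) (T1 T2 : PTree X) : ℤ :=
  sSup { d : ℤ | ∃ f : X → Fin i, d = (pscore f T2 : ℤ) - (pscore f T1 : ℤ) }

/-- `gap(T1,T2) = |max_f(l_f(T2)−l_f(T1)) − max_f(l_f(T1)−l_f(T2))|`. -/
noncomputable def gap {X : Type} (T1 T2 : PTree X) : ℤ :=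
  |maxDiff T1 T2 - maxDiff T2 T1|

/-- `gap` restricted to characters with at most `i` states. -/
noncomputable def gapk {X : Type} (i : ℕ) (T1 T2 : PTree X) : ℤ :=
  |maxDiffk i T1 T2 - maxDiffk i T2 T1|

/-- `s` occurs as a (rooted) subtree of `t`. -/
inductive IsSubtree {X : Type} : PTree X → PTree X → Prop
  | refl (t : PTree X) : IsSubtree t t
  | left {s l r : PTree X} : IsSubtree s l → IsSubtree s (.node l r)
  | right {s l r : PTree X} : IsSubtree s r → IsSubtree s (.node l r)

/-- Taxa `a`, `b` form a cherry of `T`: they are leaves with a common parent. -/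
def IsCherry {X : Type} (T : PTree X) (a b : X) : Prop :=
  IsSubtree (.node (.leaf a) (.leaf b)) T

/-- Relabel a tree on taxa `ℕ` by shifting all labels up by `s` (fresh copies). -/
def shiftT (s : ℕ) (T : PTree ℕ) : PTree ℕ := T.map (fun x => x + s)

/-- `T_a = (((((2,3),4),5),6),1)` on taxa `{1,…,6}` (taxon `j` encoded as `j-1`). -/
def Ta6 : PTree ℕ :=
  .node (.node (.node (.node (.node (.leaf 1) (.leaf 2)) (.leaf 3)) (.leaf 4)) (.leaf 5)) (.leaf 0)

/-- `T_b = ((((2,6),(3,4)),5),1)` on taxa `{1,…,6}` (taxon `j` encoded as `j-1`). -/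
def Tb6 : PTree ℕ :=
  .node (.node (.node (.node (.leaf 1) (.leaf 5)) (.node (.leaf 2) (.leaf 3))) (.leaf 4)) (.leaf 0)

/-- `T_A`: two disjoint copies of `T_a` joined under a new root (12 taxa). -/
def TA12 : PTree ℕ := .node Ta6 (shiftT 6 Ta6)

/-- `T_B`: two disjoint copies of `T_b` joined under a new root (12 taxa). -/
def TB12 : PTree ℕ := .node Tb6 (shiftT 6 Tb6)

/-- `TkA k` is the tree `T^{k+1}_A`: `k+1` disjoint copies of `T_A` arranged
along a caterpillar backbone (so `TkA 0 = T^1_A = T_A`). -/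
def TkA : ℕ → PTree ℕ
  | 0 => TA12
  | k+1 => .node (TkA k) (shiftT (12*(k+1)) TA12)

/-- `TkB k` is the tree `T^{k+1}_B`. -/
def TkB : ℕ → PTree ℕ
  | 0 => TB12
  | k+1 => .node (TkB k) (shiftT (12*(k+1)) TB12)

/-- `T_a = (((5,(6,4)),3),((1,(8,2)),7))` on taxa `{1,…,8}` (taxon `j` encoded as `j-1`). -/
def Ta8 : PTree ℕ :=
  .node (.node (.node (.leaf 4) (.node (.leaf 5) (.leaf 3))) (.leaf 2))
        (.node (.node (.leaf 0) (.node (.leaf 7) (.leaf 1))) (.leaf 6))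

/-- `T_b = (((7,((4,2),6)),3),(8,(1,5)))` on taxa `{1,…,8}` (taxon `j` encoded as `j-1`). -/
def Tb8 : PTree ℕ :=
  .node (.node (.node (.leaf 6) (.node (.node (.leaf 3) (.leaf 1)) (.leaf 5))) (.leaf 2))
        (.node (.leaf 7) (.node (.leaf 0) (.leaf 4)))

/-- `T_A` (2-state construction): two disjoint copies of `T_a` under a new root (16 taxa). -/
def TA16 : PTree ℕ := .node Ta8 (shiftT 8 Ta8)

/-- `T_B` (2-state construction): two disjoint copies of `T_b` under a new root (16 taxa). -/
def TB16 : PTree ℕ := .node Tb8 (shiftT 8 Tb8)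

/-- `T_AA`: two disjoint copies of `T_A` under a new root (32 taxa). -/
def TAA : PTree ℕ := .node TA16 (shiftT 16 TA16)

/-- `T_BB`: two disjoint copies of `T_B` under a new root (32 taxa). -/
def TBB : PTree ℕ := .node TB16 (shiftT 16 TB16)

/-- `TkAA k` is the tree `T^{k+1}_AA` (so `TkAA 0 = T^1_AA = T_AA`). -/
def TkAA : ℕ → PTree ℕ
  | 0 => TAA
  | k+1 => .node (TkAA k) (shiftT (32*(k+1)) TAA)

/-- `TkBB k` is the tree `T^{k+1}_BB`. -/
def TkBB : ℕ → PTree ℕ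
  | 0 => TBB
  | k+1 => .node (TkBB k) (shiftT (32*(k+1)) TBB)


/-! ### The construction of `T_E` and `T_V` from a cubic graph `G = (V,E)`.

The graph has vertex set `{0,…,n-1}` and edge set `{0,…,m-1}`; `ends e` gives
the two (distinct) endpoints of edge `e`.  The taxa of the constructed trees
are encoded as natural numbers:
* `0 … 32M-1` : the taxa of `S_V = T^M_AA` and `S_E = T^M_BB`;
* `xTax M ends e u = 32M + 2e + side` : the taxon `x_e[u]` for `u` an endpoint
  of `e` (`side = 0/1` according to whether `u` is the first or second
  endpoint of `e`);
* `wTax M m i j = 32M + 2m + 4i + j` : the taxon `w_i^{j+2}` (`j = 0,1,2,3`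
  encodes `w_i^2, w_i^3, w_i^4, w_i^5`);
* `gTax M m i g = 32M + 6m + 4i + g` : the taxa `α_i, β_i, γ_i, δ_i`
  (`g = 0,1,2,3`). -/

/-- The taxon `x_e[u]`. -/
def xTax (M : ℕ) (ends : ℕ → ℕ × ℕ) (e u : ℕ) : ℕ :=
  32*M + 2*e + (if (ends e).1 = u then 0 else 1)

/-- The taxon `w_i^{j+2}` for `j = 0,1,2,3`. -/
def wTax (M m i j : ℕ) : ℕ := 32*M + 2*m + 4*i + j

/-- The taxa `α_i, β_i, γ_i, δ_i` for `g = 0,1,2,3`. -/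
def gTax (M m i g : ℕ) : ℕ := 32*M + 6*m + 4*i + g

/-- `S_V = T^M_AA`. -/
def SV (M : ℕ) : PTree ℕ := TkAA (M - 1)

/-- `S_E = T^M_BB`. -/
def SE (M : ℕ) : PTree ℕ := TkBB (M - 1)

/-- A binary tree shape whose leaves are labelled by `Option ℕ` (`none` is the
leaf that will be replaced by `S_E`, `some e` the leaf that will be replaced by
the cherry of edge `e`) and whose internal nodes are labelled by `ℕ`
(the enumeration `w_1,…,w_{|E|}` of the internal nodes). -/
inductive LTree : Type
  | leaf : Option ℕ → LTree
  | node : ℕ → LTree → LTree → LTree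

/-- The list of leaf labels of an `LTree`. -/
def LTree.leafLabels : LTree → List (Option ℕ)
  | .leaf x => [x]
  | .node _ l r => l.leafLabels ++ r.leafLabels

/-- The list of internal-node labels of an `LTree`. -/
def LTree.nodeLabels : LTree → List ℕ
  | .leaf _ => []
  | .node i l r => i :: (l.nodeLabels ++ r.nodeLabels)

/-- Expansion of the tree shape into the subtree `T` of `T_E`: the leaf `none`
becomes `S_E`, the leaf `some e` becomes the cherry `(x_e[u], x_e[v])` on the
endpoints `u,v` of `e`, and every internal node `w_i` becomes the gadget
`D(w_i) = (w_i^2,((w_i^0,w_i^4),(w_i^3,(w_i^5,w_i^1))))`, where `w_i^0` and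
`w_i^1` are identified with the expansions of the two children of `w_i`. -/
def expandT (M m : ℕ) (ends : ℕ → ℕ × ℕ) : LTree → PTree ℕ
  | .leaf none => SE M
  | .leaf (some e) =>
      .node (.leaf (xTax M ends e (ends e).1)) (.leaf (xTax M ends e (ends e).2))
  | .node i l r =>
      .node (.leaf (wTax M m i 0))
        (.node (.node (expandT M m ends l) (.leaf (wTax M m i 2)))
               (.node (.leaf (wTax M m i 1))
                      (.node (.leaf (wTax M m i 3)) (expandT M m ends r))))

/-- The double cherry `((α_i,γ_i),(β_i,δ_i))`. -/
def dCherry (M m i : ℕ) : PTree ℕ :=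
  .node (.node (.leaf (gTax M m i 0)) (.leaf (gTax M m i 2)))
        (.node (.leaf (gTax M m i 1)) (.leaf (gTax M m i 3)))

/-- The rooted caterpillar whose leaves, from the bottom up, are
`h 0, h 1, …, h k`. -/
def catm (h : ℕ → PTree ℕ) : ℕ → PTree ℕ
  | 0 => h 0
  | k+1 => .node (catm h k) (h (k+1))

/-- The tree `T_E`: the expanded tree `T` joined under a new root with the
caterpillar `T'` of the `n + 3m` double cherries, arranged according to the
bijection `σ'`. -/
def TEtree (n m M : ℕ) (ends : ℕ → ℕ × ℕ) (shape : LTree) (σ' : ℕ → ℕ) : PTree ℕ :=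
  .node (expandT M m ends shape)
        (catm (fun j => dCherry M m (σ' j)) (n + 3*m - 1))

/-- The rooted triplet `(x_e[u],(x_{e*}[u],x_{e**}[u]))` for the vertex `u`,
where `(e,e*,e**) = inc u` are the three edges incident to `u`. -/
def vTriplet (M : ℕ) (ends : ℕ → ℕ × ℕ) (inc : ℕ → ℕ × ℕ × ℕ) (u : ℕ) : PTree ℕ :=
  .node (.leaf (xTax M ends (inc u).1 u))
    (.node (.leaf (xTax M ends (inc u).2.1 u)) (.leaf (xTax M ends (inc u).2.2 u)))

/-- The canonical enumeration of the collection `J` of `1 + n + 3m` pendant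
trees of `T_V`: index `0` is `S_V`; indices `1,…,n` are the vertex triplets;
after that, each edge-gadget index `i < m` contributes the single-taxon trees
`w_i^4`, `w_i^5` and the cherry `(w_i^2, w_i^3)`. -/
def Jtree (n m M : ℕ) (ends : ℕ → ℕ × ℕ) (inc : ℕ → ℕ × ℕ × ℕ) (j : ℕ) : PTree ℕ :=
  if j = 0 then SV M
  else if j ≤ n then vTriplet M ends inc (j - 1)
  else
    if (j - n - 1) % 3 = 0 then .leaf (wTax M m ((j - n - 1) / 3) 2)
    else if (j - n - 1) % 3 = 1 then .leaf (wTax M m ((j - n - 1) / 3) 3)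
    else .node (.leaf (wTax M m ((j - n - 1) / 3) 0)) (.leaf (wTax M m ((j - n - 1) / 3) 1))

/-- The cherry switch with index `i` placed on an edge of the path `K`: the
edge is subdivided twice, the pendant cherry `(α_i,β_i)` hangs from one
subdivision vertex and `(γ_i,δ_i)` from the other; `t` is what is below. -/
def cSwitch (M m i : ℕ) (t : PTree ℕ) : PTree ℕ :=
  .node (.node (.leaf (gTax M m i 0)) (.leaf (gTax M m i 1)))
    (.node (.node (.leaf (gTax M m i 2)) (.leaf (gTax M m i 3))) t)

/-- The caterpillar of `T_V`, built bottom-up: position `p` of the caterpillar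
carries the pendant tree `Jtree (τ p)`, and the `j`-th edge (bottom-up) of the
root-to-cherry-leaf path `K` carries the cherry switch with index `σ j`. -/
def buildTV (n m M : ℕ) (ends : ℕ → ℕ × ℕ) (inc : ℕ → ℕ × ℕ × ℕ)
    (σ τ : ℕ → ℕ) : ℕ → PTree ℕ
  | 0 => .node (cSwitch M m (σ 0) (Jtree n m M ends inc (τ 0)))
               (Jtree n m M ends inc (τ 1))
  | j+1 => .node (cSwitch M m (σ (j+1)) (buildTV n m M ends inc σ τ j))
                 (Jtree n m M ends inc (τ (j+2)))

/-- The tree `T_V` (there are `n + 3m` edges on the path `K`). -/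
def TVtree (n m M : ℕ) (ends : ℕ → ℕ × ℕ) (inc : ℕ → ℕ × ℕ × ℕ)
    (σ τ : ℕ → ℕ) : PTree ℕ :=
  buildTV n m M ends inc σ τ (n + 3*m - 1)

/-- The graph `G` as a `SimpleGraph` on `Fin n`. -/
def Ggraph (n m : ℕ) (ends : ℕ → ℕ × ℕ) : SimpleGraph (Fin n) :=
  SimpleGraph.fromRel (fun u v => ∃ e < m, ends e = (u.val, v.val))

/-- `MAXCUT(G)`: the maximum, over all partitions of the vertex set into two
parts (given by `c : ℕ → Bool`), of the number of edges with one endpoint in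
each part. -/
noncomputable def maxcut (m : ℕ) (ends : ℕ → ℕ × ℕ) : ℕ :=
  sSup { k : ℕ | ∃ c : ℕ → Bool,
    k = ((Finset.range m).filter (fun e => c (ends e).1 ≠ c (ends e).2)).card }

/-! ### Auxiliary development: 2-state Fitch algorithm -/

/-- Fitch set for two states. -/
inductive FS : Type
  | s0 | s1 | sb
  deriving DecidableEq

instance : Fintype FS :=
  ⟨⟨↑[FS.s0, FS.s1, FS.sb], by decide⟩, fun x => by cases x <;> decide⟩

/-- Membership of a state in a Fitch set. -/
def FS.mem (c : Fin 2) : FS → Bool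
  | .s0 => c.val == 0
  | .s1 => c.val == 1
  | .sb => true

def FS.ofState (c : Fin 2) : FS := if c.val = 0 then .s0 else .s1

/-- Penalty: 1 if the two sets are disjoint. -/
def FS.pen : FS → FS → ℕ
  | .s0, .s1 => 1
  | .s1, .s0 => 1
  | _, _ => 0

/-- Fitch combination: intersection if nonempty, else union. -/
def FS.mj : FS → FS → FS
  | .sb, x => x
  | .s0, .sb => .s0
  | .s1, .sb => .s1
  | .s0, .s0 => .s0
  | .s1, .s1 => .s1
  | .s0, .s1 => .sb
  | .s1, .s0 => .sb

/-- The Fitch algorithm: bottom-up score and root set. -/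
def fitch : PTree (Fin 2) → ℕ × FS
  | .leaf c => (0, FS.ofState c)
  | .node l r =>
      ((fitch l).1 + (fitch r).1 + FS.pen (fitch l).2 (fitch r).2,
        FS.mj (fitch l).2 (fitch r).2)

lemma cost_helper : ∀ (Sa Sb : FS) (c x y : Fin 2),
    FS.pen Sa Sb + (if FS.mem c (FS.mj Sa Sb) then 0 else 1) ≤
      ((if x = c then 0 else 1) + (if y = c then 0 else 1)) +
        ((if FS.mem x Sa then 0 else 1) + (if FS.mem y Sb then 0 else 1)) := by decide

lemma mem_ofState : ∀ c : Fin 2, FS.mem c (FS.ofState c) := by decide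

lemma changes_ge {X : Type} (f : X → Fin 2) :
    ∀ {T : PTree X} {g : ETree (Fin 2)}, IsExtension f T g →
      (fitch (T.map f)).1 + (if FS.mem g.root (fitch (T.map f)).2 then 0 else 1) ≤
        g.changes := by
  intro T g h
  induction h with
  | leaf x => simp [PTree.map, fitch, ETree.changes, ETree.root, mem_ofState]
  | @node l r gl gr c hl hr ihl ihr =>
      simp only [PTree.map, fitch, ETree.changes,
        show (ETree.node c gl gr).root = c from rfl]
      have hch := cost_helper (fitch (l.map f)).2 (fitch (r.map f)).2 c gl.root gr.root
      split_ifs at * <;> omega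

lemma mj_cases : ∀ (Sa Sb : FS) (c : Fin 2), FS.mem c (FS.mj Sa Sb) →
    (FS.pen Sa Sb = 0 ∧ FS.mem c Sa ∧ FS.mem c Sb) ∨
    (FS.pen Sa Sb = 1 ∧ FS.mem c Sa ∧ ∃ d : Fin 2, FS.mem d Sb ∧ d ≠ c) ∨
    (FS.pen Sa Sb = 1 ∧ FS.mem c Sb ∧ ∃ d : Fin 2, FS.mem d Sa ∧ d ≠ c) := by decide

lemma mem_ofState_iff : ∀ c d : Fin 2, FS.mem c (FS.ofState d) → c = d := by decide

lemma fs_nonempty : ∀ S : FS, ∃ c : Fin 2, FS.mem c S := by decide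

lemma exists_ext {X : Type} (f : X → Fin 2) :
    ∀ (T : PTree X) (c : Fin 2), FS.mem c (fitch (T.map f)).2 →
      ∃ g : ETree (Fin 2), IsExtension f T g ∧ g.root = c ∧
        g.changes = (fitch (T.map f)).1 := by
  intro T
  induction T with
  | leaf x =>
      intro c hc
      have : c = f x := mem_ofState_iff _ _ hc
      subst this
      exact ⟨.leaf (f x), .leaf x, rfl, rfl⟩
  | node l r ihl ihr =>
      intro c hc
      rcases mj_cases _ _ _ hc with ⟨hp, ha, hb⟩ | ⟨hp, ha, d, hd, hdc⟩ | ⟨hp, hb, d, hd, hdc⟩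
      · obtain ⟨gl, hgl, hrl, hcl⟩ := ihl c ha
        obtain ⟨gr, hgr, hrr, hcr⟩ := ihr c hb
        refine ⟨.node c gl gr, .node c hgl hgr, rfl, ?_⟩
        simp [ETree.changes, hrl, hrr, hcl, hcr, PTree.map, fitch, hp]
      · obtain ⟨gl, hgl, hrl, hcl⟩ := ihl c ha
        obtain ⟨gr, hgr, hrr, hcr⟩ := ihr d hd
        refine ⟨.node c gl gr, .node c hgl hgr, rfl, ?_⟩
        simp [ETree.changes, hrl, hrr, hcl, hcr, PTree.map, fitch, hp, hdc]
        omega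
      · obtain ⟨gl, hgl, hrl, hcl⟩ := ihl d hd
        obtain ⟨gr, hgr, hrr, hcr⟩ := ihr c hb
        refine ⟨.node c gl gr, .node c hgl hgr, rfl, ?_⟩
        simp [ETree.changes, hrl, hrr, hcl, hcr, PTree.map, fitch, hp, hdc]
        omega

lemma pscore_eq {X : Type} (f : X → Fin 2) (T : PTree X) :
    pscore f T = (fitch (T.map f)).1 := by
  obtain ⟨c, hc⟩ := fs_nonempty (fitch (T.map f)).2
  obtain ⟨g, hg, _, hch⟩ := exists_ext f T c hc
  have hmem : (fitch (T.map f)).1 ∈ {k : ℕ | ∃ g : ETree (Fin 2), IsExtension f T g ∧ g.changes = k} :=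
    ⟨g, hg, hch⟩
  refine le_antisymm (Nat.sInf_le hmem) (le_csInf ⟨_, hmem⟩ ?_)
  rintro k ⟨g', hg', rfl⟩
  have := changes_ge f hg'
  split_ifs at this <;> omega

/-! ### Tree utilities -/

lemma PTree.map_map {X Y Z : Type} (g : X → Y) (f : Y → Z) :
    ∀ T : PTree X, (T.map g).map f = T.map (fun x => f (g x)) := by
  intro T; induction T with
  | leaf x => rfl
  | node l r ihl ihr => simp [PTree.map, ihl, ihr]

lemma leaves_map {X Y : Type} (f : X → Y) :
    ∀ T : PTree X, (T.map f).leaves = T.leaves.map f := by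
  intro T; induction T with
  | leaf x => rfl
  | node l r ihl ihr => simp [PTree.map, PTree.leaves, ihl, ihr]

lemma len_leaves_map {X Y : Type} (f : X → Y) (T : PTree X) :
    ((T.map f).leaves).length = T.leaves.length := by
  rw [leaves_map]; exact List.length_map _

lemma pen_le_one : ∀ a b : FS, FS.pen a b ≤ 1 := by decide

lemma fitch_lt_len : ∀ T : PTree (Fin 2), (fitch T).1 + 1 ≤ T.leaves.length := by
  intro T; induction T with
  | leaf c => simp [fitch, PTree.leaves]
  | node l r ihl ihr =>
      have := pen_le_one (fitch l).2 (fitch r).2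
      simp only [fitch, PTree.leaves, List.length_append]
      omega

lemma subtree_fitch_le {s t : PTree (Fin 2)} (h : IsSubtree s t) :
    (fitch s).1 ≤ (fitch t).1 := by
  induction h with
  | refl => exact le_refl _
  | left h ih => simp only [fitch]; omega
  | right h ih => simp only [fitch]; omega

lemma graft_le {s t : PTree (Fin 2)} (h : IsSubtree s t) :
    (fitch t).1 + s.leaves.length ≤ (fitch s).1 + t.leaves.length := by
  induction h with
  | refl => exact le_refl _
  | @left l r h ih =>
      have h2 := fitch_lt_len r
      have h3 := pen_le_one (fitch l).2 (fitch r).2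
      simp only [fitch, PTree.leaves, List.length_append]
      omega
  | @right l r h ih =>
      have h2 := fitch_lt_len l
      have h3 := pen_le_one (fitch l).2 (fitch r).2
      simp only [fitch, PTree.leaves, List.length_append]
      omega

lemma subtree_map {X Y : Type} (f : X → Y) {s t : PTree X} (h : IsSubtree s t) :
    IsSubtree (s.map f) (t.map f) := by
  induction h with
  | refl => exact .refl _
  | left h ih => exact .left ih
  | right h ih => exact .right ih

lemma IsSubtree.trans {X : Type} {a b c : PTree X}
    (h1 : IsSubtree a b) (h2 : IsSubtree b c) : IsSubtree a c := by
  induction h2 with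
  | refl => exact h1
  | left h ih => exact .left ih
  | right h ih => exact .right ih

/-! ### The finite checks on the gadget trees -/

def ta8E (x0 x1 x2 x3 x4 x5 x6 x7 : Fin 2) : PTree (Fin 2) :=
  .node (.node (.node (.leaf x4) (.node (.leaf x5) (.leaf x3))) (.leaf x2))
        (.node (.node (.leaf x0) (.node (.leaf x7) (.leaf x1))) (.leaf x6))

def tb8E (x0 x1 x2 x3 x4 x5 x6 x7 : Fin 2) : PTree (Fin 2) :=
  .node (.node (.node (.leaf x6) (.node (.node (.leaf x3) (.leaf x1)) (.leaf x5))) (.leaf x2))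
        (.node (.leaf x7) (.node (.leaf x0) (.leaf x4)))

def U8 : FS → FS → ℕ
  | .s0, .s1 => 0
  | .s1, .s0 => 0
  | _, _ => 2

def U16 : FS → FS → ℕ
  | .sb, _ => 5
  | _, _ => 4

def U32 : FS → FS → ℕ
  | .sb, _ => 10
  | _, _ => 9

lemma key8 : ∀ x0 x1 x2 x3 x4 x5 x6 x7 : Fin 2,
    (fitch (ta8E x0 x1 x2 x3 x4 x5 x6 x7)).1 ≤
      (fitch (tb8E x0 x1 x2 x3 x4 x5 x6 x7)).1 +
        U8 (fitch (ta8E x0 x1 x2 x3 x4 x5 x6 x7)).2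
           (fitch (tb8E x0 x1 x2 x3 x4 x5 x6 x7)).2 := by decide

lemma mapTa8 (f : ℕ → Fin 2) :
    Ta8.map f = ta8E (f 0) (f 1) (f 2) (f 3) (f 4) (f 5) (f 6) (f 7) := rfl

lemma mapTb8 (f : ℕ → Fin 2) :
    Tb8.map f = tb8E (f 0) (f 1) (f 2) (f 3) (f 4) (f 5) (f 6) (f 7) := rfl

lemma L8 (f : ℕ → Fin 2) :
    (fitch (Ta8.map f)).1 ≤ (fitch (Tb8.map f)).1 +
      U8 (fitch (Ta8.map f)).2 (fitch (Tb8.map f)).2 := by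
  rw [mapTa8, mapTb8]; exact key8 _ _ _ _ _ _ _ _

lemma c16 : ∀ pa pb qa qb : FS,
    U8 pa pb + U8 qa qb + FS.pen pa qa ≤ U16 (FS.mj pa qa) (FS.mj pb qb) + FS.pen pb qb := by
  decide

lemma c32 : ∀ pa pb qa qb : FS,
    U16 pa pb + U16 qa qb + FS.pen pa qa ≤ U32 (FS.mj pa qa) (FS.mj pb qb) + FS.pen pb qb := by
  decide

lemma cstep : ∀ sa sb qa qb : FS, U32 qa qb + FS.pen sa qa ≤ 10 + FS.pen sb qb := by decide

lemma u32le : ∀ qa qb : FS, U32 qa qb ≤ 10 := by decide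

lemma fitch_node (l r : PTree (Fin 2)) :
    fitch (.node l r) = ((fitch l).1 + (fitch r).1 + FS.pen (fitch l).2 (fitch r).2,
      FS.mj (fitch l).2 (fitch r).2) := rfl

lemma map_shift (s : ℕ) (f : ℕ → Fin 2) (T : PTree ℕ) :
    (shiftT s T).map f = T.map (fun x => f (x + s)) := by
  rw [shiftT, PTree.map_map]

lemma L16 (f : ℕ → Fin 2) :
    (fitch (TA16.map f)).1 ≤ (fitch (TB16.map f)).1 +
      U16 (fitch (TA16.map f)).2 (fitch (TB16.map f)).2 := by
  have e1 : TA16.map f = .node (Ta8.map f) (Ta8.map (fun x => f (x + 8))) := by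
    rw [show TA16 = PTree.node Ta8 (shiftT 8 Ta8) from rfl]
    simp [PTree.map, map_shift]
  have e2 : TB16.map f = .node (Tb8.map f) (Tb8.map (fun x => f (x + 8))) := by
    rw [show TB16 = PTree.node Tb8 (shiftT 8 Tb8) from rfl]
    simp [PTree.map, map_shift]
  rw [e1, e2]
  simp only [fitch_node]
  have h1 := L8 f
  have h2 := L8 (fun x => f (x + 8))
  have h3 := c16 (fitch (Ta8.map f)).2 (fitch (Tb8.map f)).2
    (fitch (Ta8.map (fun x => f (x + 8)))).2 (fitch (Tb8.map (fun x => f (x + 8)))).2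
  omega

lemma L32 (f : ℕ → Fin 2) :
    (fitch (TAA.map f)).1 ≤ (fitch (TBB.map f)).1 +
      U32 (fitch (TAA.map f)).2 (fitch (TBB.map f)).2 := by
  have e1 : TAA.map f = .node (TA16.map f) (TA16.map (fun x => f (x + 16))) := by
    rw [show TAA = PTree.node TA16 (shiftT 16 TA16) from rfl]
    simp [PTree.map, map_shift]
  have e2 : TBB.map f = .node (TB16.map f) (TB16.map (fun x => f (x + 16))) := by
    rw [show TBB = PTree.node TB16 (shiftT 16 TB16) from rfl]
    simp [PTree.map, map_shift]
  rw [e1, e2]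
  simp only [fitch_node]
  have h1 := L16 f
  have h2 := L16 (fun x => f (x + 16))
  have h3 := c32 (fitch (TA16.map f)).2 (fitch (TB16.map f)).2
    (fitch (TA16.map (fun x => f (x + 16)))).2 (fitch (TB16.map (fun x => f (x + 16)))).2
  omega

/-- The chain bound: for every binary character, the parsimony score of
`T^{k+1}_AA` exceeds that of `T^{k+1}_BB` by at most `10(k+1)`. -/
lemma chainAB : ∀ (k : ℕ) (f : ℕ → Fin 2),
    (fitch ((TkAA k).map f)).1 ≤ (fitch ((TkBB k).map f)).1 + 10 * (k + 1) := by
  intro k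
  induction k with
  | zero =>
      intro f
      have h1 := L32 f
      have h2 := u32le (fitch (TAA.map f)).2 (fitch (TBB.map f)).2
      show (fitch (TAA.map f)).1 ≤ (fitch (TBB.map f)).1 + 10 * (0 + 1)
      omega
  | succ k ih =>
      intro f
      have e1 : (TkAA (k+1)).map f =
          .node ((TkAA k).map f) (TAA.map (fun x => f (x + 32*(k+1)))) := by
        rw [show TkAA (k+1) = PTree.node (TkAA k) (shiftT (32*(k+1)) TAA) from rfl]
        simp [PTree.map, map_shift]
      have e2 : (TkBB (k+1)).map f =
          .node ((TkBB k).map f) (TBB.map (fun x => f (x + 32*(k+1)))) := by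
        rw [show TkBB (k+1) = PTree.node (TkBB k) (shiftT (32*(k+1)) TBB) from rfl]
        simp [PTree.map, map_shift]
      rw [e1, e2]
      simp only [fitch_node]
      have h1 := ih f
      have h2 := L32 (fun x => f (x + 32*(k+1)))
      have h3 := cstep (fitch ((TkAA k).map f)).2 (fitch ((TkBB k).map f)).2
        (fitch (TAA.map (fun x => f (x + 32*(k+1))))).2
        (fitch (TBB.map (fun x => f (x + 32*(k+1))))).2
      have h4 := pen_le_one (fitch ((TkBB k).map f)).2
        (fitch (TBB.map (fun x => f (x + 32*(k+1))))).2
      omega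

/-! ### The character `f0` and its exact scores on the chains -/

def f0 : ℕ → Fin 2 :=
  fun t => if t % 8 = 2 ∨ t % 8 = 3 ∨ t % 8 = 4 ∨ t % 8 = 5 then 1 else 0

lemma f0_period (s : ℕ) (hs : s % 8 = 0) : (fun x => f0 (x + s)) = f0 := by
  funext x
  simp only [f0]
  have h : (x + s) % 8 = x % 8 := by omega
  rw [h]

lemma fAA0 : fitch (TAA.map f0) = (4, FS.sb) := by decide

lemma fBB0 : fitch (TBB.map f0) = (16, FS.sb) := by decide

lemma chainA0 : ∀ k : ℕ, fitch ((TkAA k).map f0) = (4 * (k + 1), FS.sb) := by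
  intro k
  induction k with
  | zero => exact fAA0
  | succ k ih =>
      have e1 : (TkAA (k+1)).map f0 =
          .node ((TkAA k).map f0) (TAA.map (fun x => f0 (x + 32*(k+1)))) := by
        rw [show TkAA (k+1) = PTree.node (TkAA k) (shiftT (32*(k+1)) TAA) from rfl]
        simp [PTree.map, map_shift]
      rw [e1, f0_period (32*(k+1)) (by omega)]
      rw [fitch_node, ih, fAA0]
      show ((4 * (k + 1), FS.sb).1 + (4, FS.sb).1 + 0, FS.sb) = _
      simp; ring

lemma chainB0 : ∀ k : ℕ, fitch ((TkBB k).map f0) = (16 * (k + 1), FS.sb) := by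
  intro k
  induction k with
  | zero => exact fBB0
  | succ k ih =>
      have e1 : (TkBB (k+1)).map f0 =
          .node ((TkBB k).map f0) (TBB.map (fun x => f0 (x + 32*(k+1)))) := by
        rw [show TkBB (k+1) = PTree.node (TkBB k) (shiftT (32*(k+1)) TBB) from rfl]
        simp [PTree.map, map_shift]
      rw [e1, f0_period (32*(k+1)) (by omega)]
      rw [fitch_node, ih, fBB0]
      show ((16 * (k + 1), FS.sb).1 + (16, FS.sb).1 + 0, FS.sb) = _
      simp; ring

/-! ### Locating `S_V` in `T_V` and `S_E` in `T_E`; leaf counts -/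

lemma subJ (n m M : ℕ) (ends : ℕ → ℕ × ℕ) (inc : ℕ → ℕ × ℕ × ℕ) (σ τ : ℕ → ℕ) :
    ∀ j p, p ≤ j + 1 →
      IsSubtree (Jtree n m M ends inc (τ p)) (buildTV n m M ends inc σ τ j) := by
  intro j
  induction j with
  | zero =>
      intro p hp
      interval_cases p
      · exact .left (.right (.right (.refl _)))
      · exact .right (.refl _)
  | succ j ih =>
      intro p hp
      rcases Nat.lt_or_ge p (j + 2) with h | h
      · exact .left (.right (.right (ih p (by omega))))
      · have hpe : p = j + 2 := by omega
        subst hpe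
        exact .right (.refl _)

lemma subSE (M m : ℕ) (ends : ℕ → ℕ × ℕ) :
    ∀ s : LTree, none ∈ s.leafLabels → IsSubtree (SE M) (expandT M m ends s) := by
  intro s
  induction s with
  | leaf o =>
      intro h
      simp only [LTree.leafLabels, List.mem_singleton] at h
      subst h
      exact .refl _
  | node i l r ihl ihr =>
      intro h
      simp only [LTree.leafLabels, List.mem_append] at h
      rcases h with h | h
      · exact .right (.left (.left (ihl h)))
      · exact .right (.right (.right (.right (ihr h))))

lemma lenTAA : TAA.leaves.length = 32 := by decide

lemma lenTkAA : ∀ k, (TkAA k).leaves.length = 32 * (k + 1) := by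
  intro k
  induction k with
  | zero => simpa [TkAA] using lenTAA
  | succ k ih =>
      show ((TkAA k).leaves ++ (shiftT (32*(k+1)) TAA).leaves).length = _
      rw [List.length_append, ih, shiftT, len_leaves_map, lenTAA]
      ring

lemma lenJ0 (n m M : ℕ) (ends : ℕ → ℕ × ℕ) (inc : ℕ → ℕ × ℕ × ℕ) (hM1 : 1 ≤ M) :
    (Jtree n m M ends inc 0).leaves.length = 32 * M := by
  show (SV M).leaves.length = 32 * M
  rw [SV, lenTkAA]
  omega

lemma lenJ {n m M : ℕ} {ends : ℕ → ℕ × ℕ} {inc : ℕ → ℕ × ℕ × ℕ} {j : ℕ} (hj : j ≠ 0) :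
    (Jtree n m M ends inc j).leaves.length ≤ 3 := by
  rw [Jtree, if_neg hj]
  split
  · simp [vTriplet, PTree.leaves]
  · split
    · simp [PTree.leaves]
    · split <;> simp [PTree.leaves]

lemma len_build (n m M : ℕ) (ends : ℕ → ℕ × ℕ) (inc : ℕ → ℕ × ℕ × ℕ) (σ τ : ℕ → ℕ) :
    ∀ j, ((buildTV n m M ends inc σ τ j).leaves).length =
      4 * (j + 1) + ∑ p ∈ Finset.range (j + 2), (Jtree n m M ends inc (τ p)).leaves.length := by
  intro j
  induction j with
  | zero =>
      simp [buildTV, cSwitch, PTree.leaves, Finset.sum_range_succ]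
      omega
  | succ j ih =>
      show ((PTree.node (cSwitch M m (σ (j+1)) (buildTV n m M ends inc σ τ j))
          (Jtree n m M ends inc (τ (j+2)))).leaves).length = _
      simp only [PTree.leaves, cSwitch, List.length_append, List.length_cons,
        List.length_nil, ih, Finset.sum_range_succ]
      omega

lemma sum_bound (n m M : ℕ) (ends : ℕ → ℕ × ℕ) (inc : ℕ → ℕ × ℕ × ℕ) (τ : ℕ → ℕ)
    (hM1 : 1 ≤ M) (hinj : Set.InjOn τ (Set.Iio (n + 3*m + 1))) (j : ℕ)
    (hj : j + 2 ≤ n + 3*m + 1) :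
    ∑ p ∈ Finset.range (j + 2), (Jtree n m M ends inc (τ p)).leaves.length ≤
      32 * M + 3 * (j + 2) := by
  have hle : ∀ p ∈ Finset.range (j + 2),
      (Jtree n m M ends inc (τ p)).leaves.length ≤ 3 + if τ p = 0 then 32*M else 0 := by
    intro p _
    by_cases h : τ p = 0
    · rw [if_pos h, h, lenJ0 n m M ends inc hM1]; omega
    · rw [if_neg h]; have := lenJ (n := n) (m := m) (M := M) (ends := ends) (inc := inc) h
      omega
  have h1 := Finset.sum_le_sum hle
  have h2 : ∑ p ∈ Finset.range (j + 2), (3 + if τ p = 0 then 32*M else 0) =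
      3 * (j + 2) + ∑ p ∈ Finset.range (j + 2), (if τ p = 0 then 32*M else 0) := by
    rw [Finset.sum_add_distrib, Finset.sum_const, Finset.card_range, smul_eq_mul]
    ring
  have h3 : ∑ p ∈ Finset.range (j + 2), (if τ p = 0 then 32*M else 0) ≤ 32 * M := by
    have he : ∑ p ∈ Finset.range (j + 2), (if τ p = 0 then 32*M else 0) =
        ∑ p ∈ (Finset.range (j + 2)).filter (fun p => τ p = 0), 32*M :=
      (Finset.sum_filter _ _).symm
    have hcard : ((Finset.range (j + 2)).filter (fun p => τ p = 0)).card ≤ 1 := by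
      apply Finset.card_le_one.mpr
      intro a ha b hb
      simp only [Finset.mem_filter, Finset.mem_range] at ha hb
      exact hinj (Set.mem_Iio.mpr (by omega)) (Set.mem_Iio.mpr (by omega))
        (ha.2.trans hb.2.symm)
    rw [he, Finset.sum_const, smul_eq_mul]
    have := Nat.mul_le_mul_right (32*M) hcard
    omega
  omega
/-- for every connected non-bipartite cubic graph `G` and every
choice of the arbitrary data in the construction (with `M = 36|E| + 8|V|`),
every character with at most 2 states attaining `d^2_MP(T_V,T_E)` satisfies
`l_f(T_E) > l_f(T_V)`; in particular `d^2_MP(T_V,T_E) = l_f(T_E) − l_f(T_V)`. -/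
theorem optimal_characters_asymmetric_on_construction
    (n m M : ℕ)
    (hM : M = 36*m + 8*n)
    (ends : ℕ → ℕ × ℕ)
    -- the endpoints of each edge are two distinct vertices
    (hends : ∀ e < m, (ends e).1 < n ∧ (ends e).2 < n ∧ (ends e).1 ≠ (ends e).2)
    -- the graph is simple: distinct edges have distinct (unordered) endpoint pairs
    (hsimple : ∀ e < m, ∀ e' < m, e ≠ e' →
      ends e ≠ ends e' ∧ ends e ≠ ((ends e').2, (ends e').1))
    -- the graph is cubic: every vertex lies on exactly 3 edges
    (hcubic : ∀ v < n,
      ((Finset.range m).filter (fun e => (ends e).1 = v ∨ (ends e).2 = v)).card = 3)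
    -- the graph is connected and not bipartite
    (hconn : (Ggraph n m ends).Connected)
    (hnotbip : ¬ (Ggraph n m ends).Colorable 2)
    -- `inc u` lists the three (pairwise distinct) edges incident to vertex `u`
    (inc : ℕ → ℕ × ℕ × ℕ)
    (hinc : ∀ u < n,
      (inc u).1 < m ∧ (inc u).2.1 < m ∧ (inc u).2.2 < m ∧
      (inc u).1 ≠ (inc u).2.1 ∧ (inc u).1 ≠ (inc u).2.2 ∧ (inc u).2.1 ≠ (inc u).2.2 ∧
      ((ends (inc u).1).1 = u ∨ (ends (inc u).1).2 = u) ∧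
      ((ends (inc u).2.1).1 = u ∨ (ends (inc u).2.1).2 = u) ∧
      ((ends (inc u).2.2).1 = u ∨ (ends (inc u).2.2).2 = u))
    -- an arbitrary binary tree shape on `m+1` leaves: its leaves are labelled
    -- bijectively by `{none} ∪ {some e | e < m}` and its internal nodes
    -- bijectively by `{0,…,m-1}`
    (shape : LTree)
    (hshapeLeafNodup : shape.leafLabels.Nodup)
    (hshapeLeaf : ∀ x : Option ℕ,
      x ∈ shape.leafLabels ↔ (x = none ∨ ∃ e < m, x = some e))
    (hshapeNodeNodup : shape.nodeLabels.Nodup)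
    (hshapeNode : ∀ i : ℕ, i ∈ shape.nodeLabels ↔ i < m)
    -- arbitrary bijections: `σ` assigns switch indices to the `n+3m` edges of
    -- the path `K`, `τ` assigns the trees of `J` to the `n+3m+1` caterpillar
    -- leaves of `T_V`, and `σ'` assigns the double cherries to the `n+3m`
    -- caterpillar leaves of `T'`
    (σ τ σ' : ℕ → ℕ)
    (hσ : Set.BijOn σ (Set.Iio (n + 3*m)) (Set.Iio (n + 3*m)))
    (hτ : Set.BijOn τ (Set.Iio (n + 3*m + 1)) (Set.Iio (n + 3*m + 1)))
    (hσ' : Set.BijOn σ' (Set.Iio (n + 3*m)) (Set.Iio (n + 3*m)))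
    :
    ∀ f : ℕ → Fin 2,
      ((pscore f (TVtree n m M ends inc σ τ) : ℤ) -
        (pscore f (TEtree n m M ends shape σ') : ℤ)).natAbs =
          dMPk 2 (TVtree n m M ends inc σ τ) (TEtree n m M ends shape σ') →
      pscore f (TVtree n m M ends inc σ τ) < pscore f (TEtree n m M ends shape σ') ∧
      (dMPk 2 (TVtree n m M ends inc σ τ) (TEtree n m M ends shape σ') : ℤ) =
        (pscore f (TEtree n m M ends shape σ') : ℤ) -
          (pscore f (TVtree n m M ends inc σ τ) : ℤ) := by
  -- basic size facts
  have hn : 1 ≤ n := by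
    obtain ⟨v⟩ := hconn.nonempty
    exact v.pos
  have hm3 : 3 ≤ m := by
    have h2 := Finset.card_filter_le (Finset.range m)
      (fun e => (ends e).1 = 0 ∨ (ends e).2 = 0)
    rw [hcubic 0 hn, Finset.card_range] at h2
    exact h2
  have hM1 : 1 ≤ M := by omega
  -- `S_V` is a subtree of `T_V`
  obtain ⟨p0, hp0lt, hp0⟩ : ∃ p, p < n + 3*m + 1 ∧ τ p = 0 := by
    have h0 : (0:ℕ) ∈ Set.Iio (n + 3*m + 1) := Set.mem_Iio.mpr (by omega)
    obtain ⟨p, hp, he⟩ := hτ.2.2 h0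
    exact ⟨p, Set.mem_Iio.mp hp, he⟩
  have hsubV : IsSubtree (SV M) (TVtree n m M ends inc σ τ) := by
    have h := subJ n m M ends inc σ τ (n + 3*m - 1) p0 (by omega)
    rw [hp0] at h
    exact h
  -- `S_E` is a subtree of `T_E`
  have hsubE : IsSubtree (SE M) (TEtree n m M ends shape σ') :=
    .left (subSE M m ends shape ((hshapeLeaf none).mpr (Or.inl rfl)))
  -- leaf counts
  have hlenSV : (SV M).leaves.length = 32 * M := by
    rw [SV, lenTkAA]; omega
  set B : ℕ := 4 * (n + 3*m) + 3 * (n + 3*m + 1) + 3 with hB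
  have hlenTV : (TVtree n m M ends inc σ τ).leaves.length ≤ 32 * M + B := by
    have h1 := len_build n m M ends inc σ τ (n + 3*m - 1)
    have h2 := sum_bound n m M ends inc τ hM1 hτ.2.1 (n + 3*m - 1) (by omega)
    have h3 : (TVtree n m M ends inc σ τ).leaves.length =
        (buildTV n m M ends inc σ τ (n + 3*m - 1)).leaves.length := rfl
    omega
  -- parsimony bounds for every binary character
  have hchain : ∀ f : ℕ → Fin 2,
      (fitch ((SV M).map f)).1 ≤ (fitch ((SE M).map f)).1 + 10 * M := by
    intro f
    have h := chainAB (M - 1) f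
    have e : M - 1 + 1 = M := by omega
    rw [e] at h
    exact h
  have hVle : ∀ f : ℕ → Fin 2,
      pscore f (TVtree n m M ends inc σ τ) ≤ (fitch ((SV M).map f)).1 + B := by
    intro f
    rw [pscore_eq]
    have hg := graft_le (subtree_map f hsubV)
    rw [len_leaves_map, len_leaves_map, hlenSV] at hg
    omega
  have hEge : ∀ f : ℕ → Fin 2,
      (fitch ((SE M).map f)).1 ≤ pscore f (TEtree n m M ends shape σ') := by
    intro f
    rw [pscore_eq]
    exact subtree_fitch_le (subtree_map f hsubE)
  -- the character f0
  have hf0V : (fitch ((SV M).map f0)).1 = 4 * M := by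
    have h := chainA0 (M - 1)
    have e : M - 1 + 1 = M := by omega
    rw [e] at h
    rw [show SV M = TkAA (M-1) from rfl, h]
  have hf0E : (fitch ((SE M).map f0)).1 = 16 * M := by
    have h := chainB0 (M - 1)
    have e : M - 1 + 1 = M := by omega
    rw [e] at h
    rw [show SE M = TkBB (M-1) from rfl, h]
  have hf0Vle : pscore f0 (TVtree n m M ends inc σ τ) ≤ 4 * M + B := by
    have := hVle f0
    omega
  have hf0Ege : 16 * M ≤ pscore f0 (TEtree n m M ends shape σ') := by
    have := hEge f0
    omega
  -- the MP distance is at least the difference achieved by f0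
  have hBdd : BddAbove {k : ℕ | ∃ f : ℕ → Fin 2,
      k = ((pscore f (TVtree n m M ends inc σ τ) : ℤ) -
        (pscore f (TEtree n m M ends shape σ') : ℤ)).natAbs} := by
    refine ⟨(TVtree n m M ends inc σ τ).leaves.length +
      (TEtree n m M ends shape σ').leaves.length, ?_⟩
    rintro k ⟨f, rfl⟩
    have h1 : pscore f (TVtree n m M ends inc σ τ) ≤
        (TVtree n m M ends inc σ τ).leaves.length := by
      rw [pscore_eq]
      have := fitch_lt_len ((TVtree n m M ends inc σ τ).map f)
      rw [len_leaves_map] at this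
      omega
    have h2 : pscore f (TEtree n m M ends shape σ') ≤
        (TEtree n m M ends shape σ').leaves.length := by
      rw [pscore_eq]
      have := fitch_lt_len ((TEtree n m M ends shape σ').map f)
      rw [len_leaves_map] at this
      omega
    omega
  have hDge : ((pscore f0 (TVtree n m M ends inc σ τ) : ℤ) -
      (pscore f0 (TEtree n m M ends shape σ') : ℤ)).natAbs ≤
        dMPk 2 (TVtree n m M ends inc σ τ) (TEtree n m M ends shape σ') :=
    le_csSup hBdd ⟨f0, rfl⟩
  -- conclusion
  intro f hf
  have hVf := hVle f
  have hCf := hchain f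
  have hEf := hEge f
  constructor
  · omega
  · omega

end MPDist
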